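/- Fix an integer base g ≥ 2, a real ε > 0, and k ∈ ℕ. There exists δ' = δ'(ε,k) > 0 such that for all sufficiently large ℓ, the number of strings w of length ℓ over the digit alphabet {0, 1, …, g−1} (including strings starting with 0) that are not (ε,k)-normal is at most g^{ℓ(1−δ')}. -/

import Mathlib

open Filter Finset

def nu (w σ : List ℕ) : ℕ :=
  ((Finset.range w.length).filter (fun i => σ <+: w.drop i)).card

def EKNormalStr (g : ℕ) (ε : ℝ) (k : ℕ) (w : List ℕ) : Prop :=
  ∀ σ : List ℕ, σ.length = k → (∀ d ∈ σ, d < g) →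
    |(nu w σ : ℝ) / (w.length : ℝ) - 1 / (g : ℝ) ^ k| ≤ ε

theorem prod_ite_count (s : Finset ℕ) (p : ℕ → Prop) [DecidablePred p] (t : ℝ) :
    ∏ i ∈ s, (if p i then t else 1) = t ^ (s.filter p).card := by
  rw [prod_ite, prod_const, prod_const, one_pow, mul_one]

open scoped Classical in
theorem cylinder_sum (g ℓ n k : ℕ) (ι : Fin n × Fin k → Fin ℓ) (hι : Function.Injective ι)
    (H : Fin n → (Fin k → Fin g) → ℝ) :
    ∑ w : Fin ℓ → Fin g, ∏ j : Fin n, H j (fun m => w (ι (j, m)))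
      = (g : ℝ) ^ (ℓ - n * k) * ∏ j : Fin n, ∑ c : Fin k → Fin g, H j c := by
  set p : Fin ℓ → Prop := fun i => i ∈ Set.range ι with hp
  let e2 : (Fin n × Fin k) ≃ {i // p i} := Equiv.ofInjective ι hι
  let e3 : ({i // p i} → Fin g) ≃ (Fin n → Fin k → Fin g) :=
    (Equiv.arrowCongr e2.symm (Equiv.refl _)).trans (Equiv.curry _ _ _)
  have he2 : ∀ (j : Fin n) (m : Fin k), (e2 (j, m) : Fin ℓ) = ι (j, m) := by
    intro j m
    rfl
  have he3 : ∀ (a : {i // p i} → Fin g) (j : Fin n) (m : Fin k),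
      e3 a j m = a (e2 (j, m)) := fun a j m => rfl
  have key : ∀ w : Fin ℓ → Fin g,
      (∏ j : Fin n, H j (fun m => w (ι (j, m))))
        = ∏ j : Fin n, H j (e3 (fun i : {i // p i} => w i.1) j) := by
    intro w
    refine Finset.prod_congr rfl fun j _ => congrArg (H j) (funext fun m => ?_)
    rw [he3, he2]
  have step1 : ∑ w : Fin ℓ → Fin g, ∏ j : Fin n, H j (fun m => w (ι (j, m)))
      = ∑ x : ({i // p i} → Fin g) × ({i // ¬ p i} → Fin g),
          ∏ j : Fin n, H j (e3 x.1 j) := by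
    rw [← Equiv.sum_comp (Equiv.piEquivPiSubtypeProd p (fun _ => Fin g)).symm]
    refine Finset.sum_congr rfl fun x _ => ?_
    rw [key]
    refine Finset.prod_congr rfl fun j _ => congrArg (H j) (funext fun m => ?_)
    rw [he3, he3]
    simp [Equiv.piEquivPiSubtypeProd_symm_apply, (e2 (j, m)).2]
  rw [step1, Fintype.sum_prod_type]
  have hcard : Fintype.card {i // ¬ p i} = ℓ - n * k := by
    rw [Fintype.card_subtype_compl]
    have : Fintype.card {i // p i} = n * k := by
      rw [← Fintype.card_congr e2]
      simp [Fintype.card_prod]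
    simp [this]
  calc ∑ a : {i // p i} → Fin g, ∑ _b : {i // ¬ p i} → Fin g, ∏ j, H j (e3 a j)
      = ∑ a : {i // p i} → Fin g, (g : ℝ) ^ (ℓ - n * k) * ∏ j, H j (e3 a j) := by
        refine Finset.sum_congr rfl fun a _ => ?_
        rw [Finset.sum_const, Finset.card_univ, Fintype.card_fun, hcard]
        simp [Fintype.card_fin, nsmul_eq_mul]
    _ = (g : ℝ) ^ (ℓ - n * k) * ∑ a : {i // p i} → Fin g, ∏ j, H j (e3 a j) := by
        rw [← Finset.mul_sum]
    _ = (g : ℝ) ^ (ℓ - n * k) * ∑ b : Fin n → Fin k → Fin g, ∏ j, H j (b j) := by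
        rw [Equiv.sum_comp e3 (fun b => ∏ j, H j (b j))]
    _ = (g : ℝ) ^ (ℓ - n * k) * ∏ j : Fin n, ∑ c : Fin k → Fin g, H j c := by
        congr 1
        rw [Finset.prod_univ_sum]
        simp [Fintype.piFinset_univ]

/-- the block of length `k` of `w` starting at position `i` (indices mod `ℓ`). -/
def blkN {g k ℓ : ℕ} (hℓ : 0 < ℓ) (w : Fin ℓ → Fin g) (i : ℕ) : Fin k → Fin g :=
  fun m => w ⟨(i + m) % ℓ, Nat.mod_lt _ hℓ⟩

/-- number of `j < n` such that the block at `r + j*k` equals `σv`. -/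
def cnt {g k ℓ : ℕ} (hℓ : 0 < ℓ) (σv : Fin k → Fin g) (r n : ℕ) (w : Fin ℓ → Fin g) : ℕ :=
  ((Finset.range n).filter fun j => blkN hℓ w (r + j * k) = σv).card

theorem mgf_identity {g k ℓ : ℕ} (hℓ : 0 < ℓ) (hk : 0 < k) (σv : Fin k → Fin g)
    (r n : ℕ) (hrn : r + n * k ≤ ℓ) (t : ℝ) :
    ∑ w : Fin ℓ → Fin g, t ^ (cnt hℓ σv r n w)
      = (g : ℝ) ^ (ℓ - n * k) * (t + ((g : ℝ) ^ k - 1)) ^ n := by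
  have hlt : ∀ (j : Fin n) (m : Fin k), r + (j : ℕ) * k + (m : ℕ) < ℓ := by
    intro j m
    have h1 : (j : ℕ) + 1 ≤ n := j.2
    have : ((j : ℕ) + 1) * k ≤ n * k := Nat.mul_le_mul_right k h1
    have hm := m.2
    nlinarith
  set ι : Fin n × Fin k → Fin ℓ := fun jm => ⟨r + jm.1 * k + jm.2, hlt jm.1 jm.2⟩ with hι
  have hinj : Function.Injective ι := by
    rintro ⟨j, m⟩ ⟨j', m'⟩ h
    have h' : r + (j : ℕ) * k + (m : ℕ) = r + (j' : ℕ) * k + (m' : ℕ) := congrArg Fin.val h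
    have h2 : (j : ℕ) * k + (m : ℕ) = (j' : ℕ) * k + (m' : ℕ) := by omega
    have hm : (m : ℕ) = (m' : ℕ) := by
      have := congrArg (· % k) h2
      simpa [Nat.mul_add_mod, mul_comm, Nat.mod_eq_of_lt m.2, Nat.mod_eq_of_lt m'.2] using this
    have hj : (j : ℕ) = (j' : ℕ) := by
      have h3 : (j : ℕ) * k = (j' : ℕ) * k := by omega
      exact Nat.eq_of_mul_eq_mul_right hk h3
    simp [Prod.ext_iff, Fin.ext_iff, hm, hj]
  have key : ∀ w : Fin ℓ → Fin g,
      t ^ (cnt hℓ σv r n w)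
        = ∏ j : Fin n, (fun c => if c = σv then t else 1) (fun m => w (ι (j, m))) := by
    intro w
    rw [cnt, ← prod_ite_count]
    rw [← Fin.prod_univ_eq_prod_range (fun j => if blkN hℓ w (r + j * k) = σv then t else 1) n]
    refine Finset.prod_congr rfl fun j _ => ?_
    have : blkN hℓ w (r + (j : ℕ) * k) = fun m => w (ι (j, m)) := by
      funext m
      simp only [blkN, hι]
      congr 1
      exact Fin.ext (by simp [Nat.mod_eq_of_lt (by have := hlt j m; omega : r + (j:ℕ)*k + (m:ℕ) < ℓ)])
    rw [this]
  have hcyl := cylinder_sum g ℓ n k ι hinj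
    (fun _ c => if c = σv then t else 1)
  rw [Finset.sum_congr rfl fun w _ => key w, hcyl]
  have hsum : ∑ c : Fin k → Fin g, (if c = σv then t else 1) = t + ((g : ℝ) ^ k - 1) := by
    have h1 : ∀ c : Fin k → Fin g, (if c = σv then t else 1)
        = (if c = σv then t - 1 else 0) + 1 := by
      intro c; split_ifs <;> ring
    rw [Finset.sum_congr rfl fun c _ => h1 c, Finset.sum_add_distrib,
      Finset.sum_ite_eq' Finset.univ σv (fun _ => t - 1), Finset.sum_const]
    simp [Finset.card_univ, Fintype.card_fun]
    ring
  simp only [hsum, Finset.prod_const, Finset.card_univ, Fintype.card_fin]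

open scoped Classical in
theorem chernoff_upper {g k ℓ : ℕ} (hℓ : 0 < ℓ) (hk : 0 < k) (σv : Fin k → Fin g)
    (r n : ℕ) (hrn : r + n * k ≤ ℓ) (t : ℝ) (ht : 1 ≤ t) (s : ℝ) :
    ((Finset.univ.filter fun w : Fin ℓ → Fin g => s ≤ (cnt hℓ σv r n w : ℝ)).card : ℝ) * t ^ s
      ≤ (g : ℝ) ^ (ℓ - n * k) * (t + ((g : ℝ) ^ k - 1)) ^ n := by
  have ht0 : (0 : ℝ) < t := lt_of_lt_of_le one_pos ht
  rw [← mgf_identity hℓ hk σv r n hrn t]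
  calc ((Finset.univ.filter fun w : Fin ℓ → Fin g => s ≤ (cnt hℓ σv r n w : ℝ)).card : ℝ) * t ^ s
      = ∑ w ∈ (Finset.univ.filter fun w : Fin ℓ → Fin g => s ≤ (cnt hℓ σv r n w : ℝ)), t ^ s := by
        rw [Finset.sum_const, nsmul_eq_mul]
    _ ≤ ∑ w ∈ (Finset.univ.filter fun w : Fin ℓ → Fin g => s ≤ (cnt hℓ σv r n w : ℝ)),
          t ^ (cnt hℓ σv r n w) := by
        refine Finset.sum_le_sum fun w hw => ?_
        rw [Finset.mem_filter] at hw
        calc t ^ s ≤ t ^ ((cnt hℓ σv r n w : ℕ) : ℝ) :=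
              Real.rpow_le_rpow_of_exponent_le ht hw.2
          _ = t ^ (cnt hℓ σv r n w) := Real.rpow_natCast t _
    _ ≤ ∑ w : Fin ℓ → Fin g, t ^ (cnt hℓ σv r n w) := by
        refine Finset.sum_le_sum_of_subset_of_nonneg (Finset.filter_subset _ _) fun w _ _ => ?_
        positivity

open scoped Classical in
theorem chernoff_lower {g k ℓ : ℕ} (hℓ : 0 < ℓ) (hk : 0 < k) (σv : Fin k → Fin g)
    (r n : ℕ) (hrn : r + n * k ≤ ℓ) (t : ℝ) (ht0 : 0 < t) (ht : t ≤ 1) (s : ℝ) :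
    ((Finset.univ.filter fun w : Fin ℓ → Fin g => (cnt hℓ σv r n w : ℝ) ≤ s).card : ℝ) * t ^ s
      ≤ (g : ℝ) ^ (ℓ - n * k) * (t + ((g : ℝ) ^ k - 1)) ^ n := by
  rw [← mgf_identity hℓ hk σv r n hrn t]
  calc ((Finset.univ.filter fun w : Fin ℓ → Fin g => (cnt hℓ σv r n w : ℝ) ≤ s).card : ℝ) * t ^ s
      = ∑ w ∈ (Finset.univ.filter fun w : Fin ℓ → Fin g => (cnt hℓ σv r n w : ℝ) ≤ s), t ^ s := by
        rw [Finset.sum_const, nsmul_eq_mul]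
    _ ≤ ∑ w ∈ (Finset.univ.filter fun w : Fin ℓ → Fin g => (cnt hℓ σv r n w : ℝ) ≤ s),
          t ^ (cnt hℓ σv r n w) := by
        refine Finset.sum_le_sum fun w hw => ?_
        rw [Finset.mem_filter] at hw
        calc t ^ s ≤ t ^ ((cnt hℓ σv r n w : ℕ) : ℝ) :=
              Real.rpow_le_rpow_of_exponent_ge ht0 ht hw.2
          _ = t ^ (cnt hℓ σv r n w) := Real.rpow_natCast t _
    _ ≤ ∑ w : Fin ℓ → Fin g, t ^ (cnt hℓ σv r n w) := by
        refine Finset.sum_le_sum_of_subset_of_nonneg (Finset.filter_subset _ _) fun w _ _ => ?_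
        positivity

theorem tail_bound (g k : ℕ) (hg : 2 ≤ g) (hk : 0 < k) (ε₁ : ℝ) (hε₁ : 0 < ε₁) :
    ∃ c : ℝ, 0 < c ∧ ∀ (ℓ : ℕ) (hℓ : 0 < ℓ) (σv : Fin k → Fin g) (r n : ℕ),
      r + n * k ≤ ℓ →
      ((Finset.univ.filter fun w : Fin ℓ → Fin g =>
          (1/(g:ℝ)^k + ε₁) * n ≤ (cnt hℓ σv r n w : ℝ)
            ∨ (cnt hℓ σv r n w : ℝ) < (1/(g:ℝ)^k - ε₁) * n).card : ℝ)
        ≤ 2 * (g : ℝ) ^ ℓ * Real.exp (-(c * n)) := by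
  have hg1 : (1:ℝ) < (g:ℝ) := by
    have : (2:ℝ) ≤ (g:ℝ) := by exact_mod_cast hg
    linarith
  set M : ℝ := (g:ℝ)^k with hMdef
  have hM1 : 1 ≤ M := one_le_pow₀ hg1.le
  have hM0 : 0 < M := lt_of_lt_of_le one_pos hM1
  set p : ℝ := 1 / M with hpdef
  have hp0 : 0 < p := by positivity
  have hp1 : p ≤ 1 := by rw [hpdef, div_le_one hM0]; exact hM1
  have hMp : M * p = 1 := by rw [hpdef]; field_simp
  have hpε : 0 < p + ε₁ := by linarith
  -- upper-tail constants
  set θu : ℝ := ε₁ / (p + ε₁) with hθu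
  have hθu0 : 0 < θu := div_pos hε₁ hpε
  set tu : ℝ := 1 + θu with htudef
  have htu1 : 1 ≤ tu := by rw [htudef]; linarith
  have htu0 : 0 < tu := lt_of_lt_of_le one_pos htu1
  set cu : ℝ := θu * ε₁^2 / ((1+θu)*(p+ε₁)) with hcu
  have hcu0 : 0 < cu := by positivity
  -- lower-tail constants
  set θl : ℝ := min (ε₁/(2*p)) (1/2) with hθl
  have hθl0 : 0 < θl := lt_min (by positivity) one_half_pos
  have hθl2 : θl ≤ 1/2 := min_le_right _ _
  set tl : ℝ := 1 - θl with htldef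
  have htl0 : 0 < tl := by rw [htldef]; linarith
  have htl1 : tl ≤ 1 := by rw [htldef]; linarith
  have h1θl : 0 < 1 - θl := by linarith
  set cl : ℝ := θl * ε₁ / (2*(1-θl)) with hcl
  have hcl0 : 0 < cl := by positivity
  set c : ℝ := min cu cl with hc
  have hc0 : 0 < c := lt_min hcu0 hcl0
  refine ⟨c, hc0, ?_⟩
  intro ℓ hℓ σv r n hrn
  have hgl : (g:ℝ)^(ℓ - n*k) * M^n = (g:ℝ)^ℓ := by
    rw [hMdef, ← pow_mul, ← pow_add]
    congr 1
    have h1 : n * k ≤ ℓ := le_trans (Nat.le_add_left _ _) hrn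
    rw [Nat.mul_comm k n]
    omega
  have hexpc : ∀ c' : ℝ, c ≤ c' → (Real.exp (-c'))^n ≤ Real.exp (-(c * n)) := by
    intro c' hcc
    rw [← Real.exp_nat_mul]
    apply Real.exp_le_exp.2
    have : (n:ℝ) ≥ 0 := Nat.cast_nonneg n
    nlinarith
  -- per-block bound, upper tail
  have hlogu : θu/(1+θu) ≤ Real.log tu := by
    have h := Real.log_le_sub_one_of_pos (show (0:ℝ) < tu⁻¹ by positivity)
    rw [Real.log_inv] at h
    have h2 : 1 - tu⁻¹ ≤ Real.log tu := by linarith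
    have h3 : θu/(1+θu) = 1 - tu⁻¹ := by
      rw [htudef]; field_simp; ring
    linarith [h3 ▸ h2]
  have hblocku : (1 + p*θu) / tu ^ (p+ε₁) ≤ Real.exp (-cu) := by
    have h1 : (1 + p*θu) ≤ Real.exp (p*θu) := by
      have := Real.add_one_le_exp (p*θu); linarith
    have h2 : tu ^ (p+ε₁) = Real.exp ((p+ε₁) * Real.log tu) := by
      rw [Real.rpow_def_of_pos htu0, mul_comm]
    have h3 : Real.exp ((p+ε₁) * (θu/(1+θu))) ≤ tu ^ (p+ε₁) := by
      rw [h2]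
      exact Real.exp_le_exp.2 (mul_le_mul_of_nonneg_left hlogu hpε.le)
    calc (1 + p*θu) / tu ^ (p+ε₁)
        ≤ Real.exp (p*θu) / Real.exp ((p+ε₁) * (θu/(1+θu))) := by
          apply div_le_div₀ (Real.exp_pos _).le h1 (Real.exp_pos _) h3
      _ = Real.exp (p*θu - (p+ε₁) * (θu/(1+θu))) := (Real.exp_sub _ _).symm
      _ = Real.exp (-cu) := by
          congr 1
          rw [hcu, hθu]
          have h4 : p + ε₁ ≠ 0 := ne_of_gt hpε
          have h5 : 1 + ε₁ / (p + ε₁) ≠ 0 := by positivity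
          field_simp
          ring
  -- upper tail bound
  have hup : ((Finset.univ.filter fun w : Fin ℓ → Fin g =>
      (p + ε₁) * n ≤ (cnt hℓ σv r n w : ℝ)).card : ℝ)
      ≤ (g:ℝ)^ℓ * Real.exp (-(c * n)) := by
    have key := chernoff_upper hℓ hk σv r n hrn tu htu1 ((p+ε₁)*(n:ℝ))
    have hts : (0:ℝ) < tu ^ ((p+ε₁)*(n:ℝ)) := Real.rpow_pos_of_pos htu0 _
    have hnum : tu + (M - 1) = M * (1 + p*θu) := by
      have : M * (1 + p*θu) = M + (M*p)*θu := by ring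
      rw [this, hMp, one_mul, htudef]; ring
    have hden : tu ^ ((p+ε₁)*(n:ℝ)) = (tu ^ (p+ε₁))^n := by
      rw [Real.rpow_mul htu0.le, Real.rpow_natCast]
    have hstep : ((Finset.univ.filter fun w : Fin ℓ → Fin g =>
        (p + ε₁) * n ≤ (cnt hℓ σv r n w : ℝ)).card : ℝ)
        ≤ (g:ℝ)^ℓ * ((1 + p*θu) / tu ^ (p+ε₁))^n := by
      rw [div_pow, ← mul_div_assoc]
      rw [le_div_iff₀ (by positivity)]
      calc ((Finset.univ.filter fun w : Fin ℓ → Fin g =>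
            (p + ε₁) * n ≤ (cnt hℓ σv r n w : ℝ)).card : ℝ) * (tu ^ (p+ε₁))^n
          = ((Finset.univ.filter fun w : Fin ℓ → Fin g =>
            (p + ε₁) * n ≤ (cnt hℓ σv r n w : ℝ)).card : ℝ) * tu ^ ((p+ε₁)*(n:ℝ)) := by
            rw [hden]
        _ ≤ (g : ℝ) ^ (ℓ - n * k) * (tu + (M - 1)) ^ n := key
        _ = (g:ℝ)^ℓ * (1 + p*θu)^n := by
            rw [hnum, mul_pow, ← mul_assoc, hgl]
    calc ((Finset.univ.filter fun w : Fin ℓ → Fin g =>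
          (p + ε₁) * n ≤ (cnt hℓ σv r n w : ℝ)).card : ℝ)
        ≤ (g:ℝ)^ℓ * ((1 + p*θu) / tu ^ (p+ε₁))^n := hstep
      _ ≤ (g:ℝ)^ℓ * (Real.exp (-cu))^n := by
          apply mul_le_mul_of_nonneg_left _ (by positivity)
          apply pow_le_pow_left₀ _ hblocku
          positivity
      _ ≤ (g:ℝ)^ℓ * Real.exp (-(c * n)) := by
          apply mul_le_mul_of_nonneg_left (hexpc cu (min_le_left _ _)) (by positivity)
  -- lower tail bound
  have hlo : ((Finset.univ.filter fun w : Fin ℓ → Fin g =>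
      (cnt hℓ σv r n w : ℝ) < (p - ε₁) * n).card : ℝ)
      ≤ (g:ℝ)^ℓ * Real.exp (-(c * n)) := by
    by_cases hpe : p - ε₁ ≤ 0
    · have hempty : (Finset.univ.filter fun w : Fin ℓ → Fin g =>
          (cnt hℓ σv r n w : ℝ) < (p - ε₁) * n) = ∅ := by
        rw [Finset.filter_eq_empty_iff]
        intro w _
        push_neg
        have h1 : (p - ε₁) * n ≤ 0 := mul_nonpos_of_nonpos_of_nonneg hpe (Nat.cast_nonneg n)
        have h2 : (0:ℝ) ≤ (cnt hℓ σv r n w : ℝ) := Nat.cast_nonneg _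
        linarith
      rw [hempty]
      simp
      positivity
    · push_neg at hpe
      have hpθl : p*θl ≤ ε₁/2 := by
        have h1 : θl ≤ ε₁/(2*p) := min_le_left _ _
        calc p*θl ≤ p*(ε₁/(2*p)) := mul_le_mul_of_nonneg_left h1 hp0.le
          _ = ε₁/2 := by field_simp
      have h1mp : 0 < 1 - p*θl := by
        have h2 : p*θl ≤ 1/2 := by
          calc p*θl ≤ 1*θl := mul_le_mul_of_nonneg_right hp1 hθl0.le
            _ ≤ 1/2 := by rw [one_mul]; exact hθl2
        linarith
      have hlogl : -(θl/(1-θl)) ≤ Real.log tl := by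
        have h := Real.log_le_sub_one_of_pos (show (0:ℝ) < tl⁻¹ by positivity)
        rw [Real.log_inv] at h
        have h2 : 1 - tl⁻¹ ≤ Real.log tl := by linarith
        have h3 : -(θl/(1-θl)) = 1 - tl⁻¹ := by
          rw [htldef]; field_simp; ring
        linarith [h3 ▸ h2]
      have hblockl : (1 - p*θl) / tl ^ (p-ε₁) ≤ Real.exp (-cl) := by
        have h1 : (1 - p*θl) ≤ Real.exp (-(p*θl)) := by
          have := Real.add_one_le_exp (-(p*θl)); linarith
        have h2 : tl ^ (p-ε₁) = Real.exp ((p-ε₁) * Real.log tl) := by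
          rw [Real.rpow_def_of_pos htl0, mul_comm]
        have h3 : Real.exp ((p-ε₁) * (-(θl/(1-θl)))) ≤ tl ^ (p-ε₁) := by
          rw [h2]
          exact Real.exp_le_exp.2 (mul_le_mul_of_nonneg_left hlogl (by linarith))
        calc (1 - p*θl) / tl ^ (p-ε₁)
            ≤ Real.exp (-(p*θl)) / Real.exp ((p-ε₁) * (-(θl/(1-θl)))) := by
              apply div_le_div₀ (Real.exp_pos _).le h1 (Real.exp_pos _) h3
          _ = Real.exp (-(p*θl) - (p-ε₁) * (-(θl/(1-θl)))) := (Real.exp_sub _ _).symm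
          _ ≤ Real.exp (-cl) := by
              apply Real.exp_le_exp.2
              have e1 : -(p*θl) - (p-ε₁) * (-(θl/(1-θl))) = θl*(p*θl - ε₁)/(1-θl) := by
                field_simp
                ring
              have e2 : -cl = θl*(-(ε₁/2))/(1-θl) := by
                rw [hcl]
                field_simp
              rw [e1, e2]
              apply (div_le_div_iff_of_pos_right h1θl).2
              apply mul_le_mul_of_nonneg_left _ hθl0.le
              linarith
      -- main lower-tail chain
      have hsub : (Finset.univ.filter fun w : Fin ℓ → Fin g =>
          (cnt hℓ σv r n w : ℝ) < (p - ε₁) * n)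
          ⊆ (Finset.univ.filter fun w : Fin ℓ → Fin g =>
          (cnt hℓ σv r n w : ℝ) ≤ (p - ε₁) * n) := by
        apply Finset.monotone_filter_right
        intro w _ hw
        exact le_of_lt hw
      have key := chernoff_lower hℓ hk σv r n hrn tl htl0 htl1 ((p-ε₁)*(n:ℝ))
      have hts : (0:ℝ) < tl ^ ((p-ε₁)*(n:ℝ)) := Real.rpow_pos_of_pos htl0 _
      have hnum : tl + (M - 1) = M * (1 - p*θl) := by
        have : M * (1 - p*θl) = M - (M*p)*θl := by ring
        rw [this, hMp, one_mul, htldef]; ring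
      have hden : tl ^ ((p-ε₁)*(n:ℝ)) = (tl ^ (p-ε₁))^n := by
        rw [Real.rpow_mul htl0.le, Real.rpow_natCast]
      have hstep : ((Finset.univ.filter fun w : Fin ℓ → Fin g =>
          (cnt hℓ σv r n w : ℝ) ≤ (p - ε₁) * n).card : ℝ)
          ≤ (g:ℝ)^ℓ * ((1 - p*θl) / tl ^ (p-ε₁))^n := by
        rw [div_pow, ← mul_div_assoc]
        rw [le_div_iff₀ (by positivity)]
        calc ((Finset.univ.filter fun w : Fin ℓ → Fin g =>
              (cnt hℓ σv r n w : ℝ) ≤ (p - ε₁) * n).card : ℝ) * (tl ^ (p-ε₁))^n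
            = ((Finset.univ.filter fun w : Fin ℓ → Fin g =>
              (cnt hℓ σv r n w : ℝ) ≤ (p - ε₁) * n).card : ℝ) * tl ^ ((p-ε₁)*(n:ℝ)) := by
              rw [hden]
          _ ≤ (g : ℝ) ^ (ℓ - n * k) * (tl + (M - 1)) ^ n := key
          _ = (g:ℝ)^ℓ * (1 - p*θl)^n := by
              rw [hnum, mul_pow, ← mul_assoc, hgl]
      calc ((Finset.univ.filter fun w : Fin ℓ → Fin g =>
            (cnt hℓ σv r n w : ℝ) < (p - ε₁) * n).card : ℝ)
          ≤ ((Finset.univ.filter fun w : Fin ℓ → Fin g =>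
            (cnt hℓ σv r n w : ℝ) ≤ (p - ε₁) * n).card : ℝ) := by
            exact_mod_cast Finset.card_le_card hsub
        _ ≤ (g:ℝ)^ℓ * ((1 - p*θl) / tl ^ (p-ε₁))^n := hstep
        _ ≤ (g:ℝ)^ℓ * (Real.exp (-cl))^n := by
            apply mul_le_mul_of_nonneg_left _ (by positivity)
            apply pow_le_pow_left₀ _ hblockl
            positivity
        _ ≤ (g:ℝ)^ℓ * Real.exp (-(c * n)) := by
            apply mul_le_mul_of_nonneg_left (hexpc cl (min_le_right _ _)) (by positivity)
  -- combine the two tails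
  have hor : (Finset.univ.filter fun w : Fin ℓ → Fin g =>
      (p + ε₁) * n ≤ (cnt hℓ σv r n w : ℝ)
        ∨ (cnt hℓ σv r n w : ℝ) < (p - ε₁) * n)
      ⊆ (Finset.univ.filter fun w : Fin ℓ → Fin g =>
          (p + ε₁) * n ≤ (cnt hℓ σv r n w : ℝ))
        ∪ (Finset.univ.filter fun w : Fin ℓ → Fin g =>
          (cnt hℓ σv r n w : ℝ) < (p - ε₁) * n) := by
    intro w hw
    rw [Finset.mem_filter] at hw
    rw [Finset.mem_union, Finset.mem_filter, Finset.mem_filter]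
    rcases hw.2 with h | h
    · exact Or.inl ⟨hw.1, h⟩
    · exact Or.inr ⟨hw.1, h⟩
  calc ((Finset.univ.filter fun w : Fin ℓ → Fin g =>
        (p + ε₁) * n ≤ (cnt hℓ σv r n w : ℝ)
          ∨ (cnt hℓ σv r n w : ℝ) < (p - ε₁) * n).card : ℝ)
      ≤ (((Finset.univ.filter fun w : Fin ℓ → Fin g =>
          (p + ε₁) * n ≤ (cnt hℓ σv r n w : ℝ))
        ∪ (Finset.univ.filter fun w : Fin ℓ → Fin g =>
          (cnt hℓ σv r n w : ℝ) < (p - ε₁) * n)).card : ℝ) := by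
        exact_mod_cast Finset.card_le_card hor
    _ ≤ (((Finset.univ.filter fun w : Fin ℓ → Fin g =>
          (p + ε₁) * n ≤ (cnt hℓ σv r n w : ℝ)).card : ℝ)
        + ((Finset.univ.filter fun w : Fin ℓ → Fin g =>
          (cnt hℓ σv r n w : ℝ) < (p - ε₁) * n).card : ℝ)) := by
        exact_mod_cast Finset.card_union_le _ _
    _ ≤ 2 * (g : ℝ) ^ ℓ * Real.exp (-(c * n)) := by
        have := hup
        have := hlo
        linarith

theorem sum_reindex (k ℓ : ℕ) (hk : 0 < k) (hkl : k ≤ ℓ) (f : ℕ → ℕ) :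
    ∑ i ∈ Finset.range (ℓ - k + 1), f i
      = ∑ r ∈ Finset.range k, ∑ j ∈ Finset.range ((ℓ - r)/k), f (r + j*k) := by
  rw [show (∑ r ∈ Finset.range k, ∑ j ∈ Finset.range ((ℓ - r)/k), f (r + j*k))
      = ∑ x ∈ (Finset.range k).sigma (fun r => Finset.range ((ℓ - r)/k)), f (x.1 + x.2 * k)
    from (Finset.sum_sigma (Finset.range k) (fun r => Finset.range ((ℓ - r)/k))
      (fun x => f (x.1 + x.2 * k))).symm]
  refine Finset.sum_nbij' (fun i => (⟨i % k, i / k⟩ : (_ : ℕ) × ℕ))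
    (fun x => x.1 + x.2 * k) ?_ ?_ ?_ ?_ ?_
  · intro i hi
    rw [Finset.mem_range] at hi
    rw [Finset.mem_sigma, Finset.mem_range, Finset.mem_range]
    refine ⟨Nat.mod_lt _ hk, ?_⟩
    show i / k < (ℓ - i % k) / k
    have h1 : i / k + 1 ≤ (ℓ - i % k) / k := by
      rw [Nat.le_div_iff_mul_le hk, add_mul, one_mul]
      have h2 := Nat.mod_add_div' i k
      set t := i / k * k
      omega
    omega
  · intro x hx
    rw [Finset.mem_sigma, Finset.mem_range, Finset.mem_range] at hx
    rw [Finset.mem_range]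
    have h1 := hx.2
    rw [Nat.lt_iff_add_one_le, Nat.le_div_iff_mul_le hk, add_mul, one_mul] at h1
    set t := x.2 * k
    omega
  · intro i hi
    dsimp only
    exact Nat.mod_add_div' i k
  · intro x hx
    rw [Finset.mem_sigma, Finset.mem_range, Finset.mem_range] at hx
    obtain ⟨a, b⟩ := x
    have h1 : (a + b * k) % k = a := by
      rw [Nat.add_mul_mod_self_right, Nat.mod_eq_of_lt hx.1]
    have h2 : (a + b * k) / k = b := by
      rw [Nat.add_mul_div_right _ _ hk, Nat.div_eq_of_lt hx.1, zero_add]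
    dsimp only
    rw [h1, h2]
  · intro i hi
    dsimp only
    rw [Nat.mod_add_div' i k]

theorem prefix_iff_blk {g k ℓ : ℕ} (hℓ : 0 < ℓ) (hk : 0 < k) (w : Fin ℓ → Fin g)
    (σ : List ℕ) (hσ : σ.length = k) (σv : Fin k → Fin g)
    (hσv : ∀ m : Fin k, (σv m : ℕ) = σ[(m : ℕ)]'(by rw [hσ]; exact m.2)) (i : ℕ) :
    σ <+: (List.ofFn fun t => ((w t : ℕ))).drop i ↔ (i + k ≤ ℓ ∧ blkN hℓ w i = σv) := by
  set L := List.ofFn fun t : Fin ℓ => ((w t : ℕ)) with hL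
  have hLlen : L.length = ℓ := by rw [hL, List.length_ofFn]
  have hgetL : ∀ (j : ℕ) (hj : j < ℓ), L[j]'(by rw [hLlen]; exact hj) = (w ⟨j, hj⟩ : ℕ) := by
    intro j hj
    simp [hL, List.getElem_ofFn]
  have hdroplen : (L.drop i).length = ℓ - i := by rw [List.length_drop, hLlen]
  constructor
  · intro h
    have hlen : k ≤ ℓ - i := by
      have := h.length_le
      rwa [hdroplen, hσ] at this
    have hik : i + k ≤ ℓ := by omega
    refine ⟨hik, ?_⟩
    funext m
    have him : i + (m : ℕ) < ℓ := by have := m.2; omega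
    have hm' : (m : ℕ) < σ.length := by rw [hσ]; exact m.2
    have h1 := h.getElem hm'
    rw [List.getElem_drop] at h1
    have h2 : L[i + (m : ℕ)]'(by rw [hLlen]; exact him) = σ[(m : ℕ)]'hm' := by
      rw [← h1]
    rw [hgetL _ him] at h2
    apply Fin.ext
    rw [hσv m]
    show (w ⟨(i + (m : ℕ)) % ℓ, _⟩ : ℕ) = _
    rw [← h2]
    simp [Nat.mod_eq_of_lt him]
  · rintro ⟨hik, hblk⟩
    rw [List.prefix_iff_eq_take]
    apply List.ext_getElem
    · rw [List.length_take, hdroplen, hσ]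
      omega
    · intro j hj1 hj2
      have hjk : j < k := by rwa [hσ] at hj1
      have him : i + j < ℓ := by omega
      rw [List.getElem_take, List.getElem_drop, hgetL _ him]
      have hb := congrFun hblk ⟨j, hjk⟩
      have : (blkN hℓ w i ⟨j, hjk⟩ : ℕ) = (σv ⟨j, hjk⟩ : ℕ) := by rw [hb]
      rw [hσv ⟨j, hjk⟩] at this
      rw [← this]
      simp [blkN, Nat.mod_eq_of_lt him]

theorem nu_eq_sum_cnt {g k ℓ : ℕ} (hℓ : 0 < ℓ) (hk : 0 < k) (hkl : k ≤ ℓ)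
    (w : Fin ℓ → Fin g) (σ : List ℕ) (hσ : σ.length = k) (σv : Fin k → Fin g)
    (hσv : ∀ m : Fin k, (σv m : ℕ) = σ[(m : ℕ)]'(by rw [hσ]; exact m.2)) :
    nu (List.ofFn fun t => ((w t : ℕ))) σ
      = ∑ r ∈ Finset.range k, cnt hℓ σv r ((ℓ - r)/k) w := by
  have hiff := prefix_iff_blk hℓ hk w σ hσ σv hσv
  rw [nu, Finset.card_filter]
  have hlen : (List.ofFn fun t : Fin ℓ => ((w t : ℕ))).length = ℓ := List.length_ofFn
  rw [hlen]
  have hsub : Finset.range (ℓ - k + 1) ⊆ Finset.range ℓ := by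
    apply Finset.range_subset_range.2; omega
  rw [← Finset.sum_subset hsub (by
    intro i hi1 hi2
    rw [Finset.mem_range] at hi1
    rw [Finset.mem_range] at hi2
    rw [if_neg]
    intro hpre
    have := (hiff i).1 hpre
    omega)]
  have hpt : ∀ i ∈ Finset.range (ℓ - k + 1),
      (if σ <+: (List.ofFn fun t => ((w t : ℕ))).drop i then 1 else 0)
        = (if blkN hℓ w i = σv then 1 else 0) := by
    intro i hi
    rw [Finset.mem_range] at hi
    have hik : i + k ≤ ℓ := by omega
    apply if_congr _ rfl rfl
    rw [hiff i]
    simp [hik]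
  rw [Finset.sum_congr rfl hpt]
  rw [sum_reindex k ℓ hk hkl (fun i => if blkN hℓ w i = σv then 1 else 0)]
  refine Finset.sum_congr rfl fun r _ => ?_
  rw [cnt, Finset.card_filter]
set_option maxHeartbeats 1000000 in
open scoped Classical in
theorem copeland_erdos_string_count (g : ℕ) (hg : 2 ≤ g) (ε : ℝ) (hε : 0 < ε) (k : ℕ) :
    ∃ δ' : ℝ, 0 < δ' ∧ ∀ᶠ ℓ : ℕ in atTop,
      ((Finset.univ.filter fun w : Fin ℓ → Fin g =>
          ¬ EKNormalStr g ε k (List.ofFn fun i => ((w i : ℕ)))).card : ℝ)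
        ≤ (g : ℝ) ^ ((ℓ : ℝ) * (1 - δ')) := by
  have hg1R : (1:ℝ) < (g:ℝ) := by
    have : (2:ℝ) ≤ (g:ℝ) := by exact_mod_cast hg
    linarith
  have hg0R : (0:ℝ) < (g:ℝ) := by linarith
  rcases Nat.eq_zero_or_pos k with hk0 | hk
  · -- trivial case k = 0
    subst hk0
    refine ⟨1, one_pos, ?_⟩
    filter_upwards [eventually_ge_atTop 1] with ℓ hℓ1
    have hempty : (Finset.univ.filter fun w : Fin ℓ → Fin g =>
        ¬ EKNormalStr g ε 0 (List.ofFn fun i => ((w i : ℕ)))) = ∅ := by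
      rw [Finset.filter_eq_empty_iff]
      intro w _
      rw [not_not]
      intro σ hσlen hσdig
      have hσnil : σ = [] := List.eq_nil_of_length_eq_zero hσlen
      subst hσnil
      have hlen : (List.ofFn fun i : Fin ℓ => ((w i : ℕ))).length = ℓ := List.length_ofFn
      have hnu : nu (List.ofFn fun i : Fin ℓ => ((w i : ℕ))) [] = ℓ := by
        rw [nu, hlen]
        rw [Finset.filter_true_of_mem (fun i _ => List.nil_prefix)]
        exact Finset.card_range ℓ
      rw [hnu, hlen]
      have hℓ0 : (ℓ:ℝ) ≠ 0 := by
        have : 0 < ℓ := hℓ1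
        positivity
      rw [pow_zero, div_self hℓ0, div_one, sub_self, abs_zero]
      exact hε.le
    rw [hempty]
    simp only [Finset.card_empty, Nat.cast_zero]
    positivity
  · -- main case k ≥ 1
    set ε₁ : ℝ := ε/2 with hε₁def
    have hε₁0 : 0 < ε₁ := by positivity
    obtain ⟨c, hc0, hbd⟩ := tail_bound g k hg hk ε₁ hε₁0
    have hlg : 0 < Real.log g := Real.log_pos hg1R
    have hkR : (0:ℝ) < (k:ℝ) := by exact_mod_cast hk
    set δ' : ℝ := c / (4 * k * Real.log g) with hδ'def
    have hδ'0 : 0 < δ' := by positivity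
    refine ⟨δ', hδ'0, ?_⟩
    obtain ⟨N1, hN1⟩ := exists_nat_ge ((2*k)/ε)
    obtain ⟨N2, hN2⟩ := exists_nat_ge ((4*k/c) * Real.log (2*k*(g:ℝ)^k))
    filter_upwards [eventually_ge_atTop (max (max (4*k) 1) (max N1 N2))] with ℓ hℓge
    have hℓ4k : 4*k ≤ ℓ := le_trans (le_trans (le_max_left _ _) (le_max_left _ _)) hℓge
    have hℓ1 : 1 ≤ ℓ := le_trans (le_trans (le_max_right _ _) (le_max_left _ _)) hℓge
    have hℓ0 : 0 < ℓ := hℓ1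
    have hkl : k ≤ ℓ := by omega
    have hℓ0R : (0:ℝ) < (ℓ:ℝ) := by exact_mod_cast hℓ0
    have hN1ℓ : (2*k)/ε ≤ (ℓ:ℝ) := by
      refine le_trans hN1 ?_
      exact_mod_cast le_trans (le_trans (le_max_left _ _) (le_max_right _ _)) hℓge
    have hN2ℓ : (4*k/c) * Real.log (2*k*(g:ℝ)^k) ≤ (ℓ:ℝ) := by
      refine le_trans hN2 ?_
      exact_mod_cast le_trans (le_trans (le_max_right _ _) (le_max_right _ _)) hℓge
    have hkεℓ : (k:ℝ) ≤ ε₁ * ℓ := by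
      rw [hε₁def]
      rw [div_le_iff₀ hε] at hN1ℓ
      nlinarith
    set p : ℝ := 1/(g:ℝ)^k with hpdef
    have hp0 : 0 < p := by positivity
    have hp1 : p ≤ 1 := by
      rw [hpdef, div_le_one (by positivity)]
      exact one_le_pow₀ hg1R.le
    -- the deviation sets
    set T : (Fin k → Fin g) → ℕ → Finset (Fin ℓ → Fin g) := fun σv r =>
      (Finset.univ.filter fun w : Fin ℓ → Fin g =>
        (p + ε₁) * (((ℓ - r)/k : ℕ):ℝ) ≤ (cnt hℓ0 σv r ((ℓ - r)/k) w : ℝ)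
          ∨ (cnt hℓ0 σv r ((ℓ - r)/k) w : ℝ) < (p - ε₁) * (((ℓ - r)/k : ℕ):ℝ)) with hT
    -- total number of valid positions
    have hsumn : ∑ r ∈ Finset.range k, ((ℓ - r)/k) = ℓ - k + 1 := by
      have := sum_reindex k ℓ hk hkl (fun _ => 1)
      simp only [Finset.sum_const, Finset.card_range, smul_eq_mul, mul_one] at this
      exact this.symm
    -- subset claim
    have hsubset : (Finset.univ.filter fun w : Fin ℓ → Fin g =>
        ¬ EKNormalStr g ε k (List.ofFn fun i => ((w i : ℕ))))
        ⊆ Finset.univ.biUnion (fun σv : Fin k → Fin g =>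
            (Finset.range k).biUnion (fun r => T σv r)) := by
      intro w hw
      rw [Finset.mem_filter] at hw
      by_contra hnot
      apply hw.2
      intro σ hσlen hσdig
      have hmem : ∀ (σv : Fin k → Fin g), ∀ r ∈ Finset.range k, w ∉ T σv r := by
        intro σv r hr
        intro hmem'
        exact hnot (Finset.mem_biUnion.2 ⟨σv, Finset.mem_univ _,
          Finset.mem_biUnion.2 ⟨r, hr, hmem'⟩⟩)
      -- build σv from σ
      have hdig : ∀ m : Fin k, σ[(m:ℕ)]'(by rw [hσlen]; exact m.2) < g := by
        intro m
        exact hσdig _ (List.getElem_mem _)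
      set σv : Fin k → Fin g := fun m => ⟨σ[(m:ℕ)]'(by rw [hσlen]; exact m.2), hdig m⟩ with hσv
      have hσveq : ∀ m : Fin k, (σv m : ℕ) = σ[(m:ℕ)]'(by rw [hσlen]; exact m.2) := fun m => rfl
      have hν := nu_eq_sum_cnt hℓ0 hk hkl w σ hσlen σv hσveq
      -- bounds on each residue
      have hbnd : ∀ r ∈ Finset.range k,
          (p - ε₁) * (((ℓ - r)/k : ℕ):ℝ) ≤ (cnt hℓ0 σv r ((ℓ - r)/k) w : ℝ)
            ∧ (cnt hℓ0 σv r ((ℓ - r)/k) w : ℝ) ≤ (p + ε₁) * (((ℓ - r)/k : ℕ):ℝ) := by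
        intro r hr
        have := hmem σv r hr
        rw [hT] at this
        simp only [Finset.mem_filter, Finset.mem_univ, true_and, not_or, not_le, not_lt] at this
        exact ⟨this.2, this.1.le⟩
      have hcast : ((nu (List.ofFn fun i => ((w i : ℕ))) σ : ℕ) : ℝ)
          = ∑ r ∈ Finset.range k, ((cnt hℓ0 σv r ((ℓ - r)/k) w : ℕ) : ℝ) := by
        rw [hν]
        push_cast
        rfl
      have hup : ((nu (List.ofFn fun i => ((w i : ℕ))) σ : ℕ) : ℝ)
          ≤ (p + ε₁) * (((ℓ - k + 1 : ℕ)):ℝ) := by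
        rw [hcast]
        calc ∑ r ∈ Finset.range k, ((cnt hℓ0 σv r ((ℓ - r)/k) w : ℕ) : ℝ)
            ≤ ∑ r ∈ Finset.range k, (p + ε₁) * (((ℓ - r)/k : ℕ):ℝ) :=
              Finset.sum_le_sum (fun r hr => (hbnd r hr).2)
          _ = (p + ε₁) * ∑ r ∈ Finset.range k, (((ℓ - r)/k : ℕ):ℝ) := by
              rw [Finset.mul_sum]
          _ = (p + ε₁) * (((ℓ - k + 1 : ℕ)):ℝ) := by
              rw [← Nat.cast_sum, hsumn]
      have hdn : (p - ε₁) * (((ℓ - k + 1 : ℕ)):ℝ)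
          ≤ ((nu (List.ofFn fun i => ((w i : ℕ))) σ : ℕ) : ℝ) := by
        rw [hcast]
        calc (p - ε₁) * (((ℓ - k + 1 : ℕ)):ℝ)
            = ∑ r ∈ Finset.range k, (p - ε₁) * (((ℓ - r)/k : ℕ):ℝ) := by
              rw [← Finset.mul_sum, ← Nat.cast_sum, hsumn]
          _ ≤ ∑ r ∈ Finset.range k, ((cnt hℓ0 σv r ((ℓ - r)/k) w : ℕ) : ℝ) :=
              Finset.sum_le_sum (fun r hr => (hbnd r hr).1)
      -- conclude normality bound
      have hlen : (List.ofFn fun i : Fin ℓ => ((w i : ℕ))).length = ℓ := List.length_ofFn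
      rw [hlen]
      have hScast : (((ℓ - k + 1 : ℕ)):ℝ) = (ℓ:ℝ) - k + 1 := by
        push_cast [Nat.cast_sub hkl]
        ring
      rw [hScast] at hup hdn
      have hkℝ1 : (1:ℝ) ≤ (k:ℝ) := by exact_mod_cast hk
      have hklR : (k:ℝ) ≤ (ℓ:ℝ) := by exact_mod_cast hkl
      clear hbd hmem hnot hν hcast hw
      rw [abs_sub_le_iff]
      constructor
      · rw [← hpdef, sub_le_iff_le_add, div_le_iff₀ hℓ0R]
        nlinarith [hup, hp0, hp1, hε₁0, hkεℓ,
          mul_nonneg (by positivity : (0:ℝ) ≤ p + ε₁) (by linarith : (0:ℝ) ≤ (k:ℝ) - 1)]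
      · rw [← hpdef, sub_le_comm, le_div_iff₀ hℓ0R]
        have h2 : (p - ε) * ℓ ≤ (p - ε₁) * ((ℓ:ℝ) - k + 1) := by
          rcases le_or_gt ε₁ p with hcase | hcase
          · nlinarith [hkεℓ, hp1, hkℝ1, hklR, hε₁0]
          · nlinarith [hkεℓ, hp1, hkℝ1, hklR, hε₁0]
        linarith [hdn]
    -- counting part
    set E : ℝ := Real.exp (-(c * ((ℓ:ℝ)/(2*(k:ℝ))))) with hE
    have hE0 : (0:ℝ) ≤ E := (Real.exp_pos _).le
    have hTbound : ∀ (σv : Fin k → Fin g), ∀ r ∈ Finset.range k,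
        ((T σv r).card : ℝ) ≤ 2 * (g:ℝ)^ℓ * E := by
      intro σv r hr
      rw [Finset.mem_range] at hr
      have hrn : r + ((ℓ - r)/k) * k ≤ ℓ := by
        have h1 : ((ℓ - r)/k) * k ≤ ℓ - r := Nat.div_mul_le_self _ _
        omega
      have h2 := hbd ℓ hℓ0 σv r ((ℓ - r)/k) hrn
      have hnr : (ℓ:ℝ)/(2*(k:ℝ)) ≤ (((ℓ - r)/k : ℕ):ℝ) := by
        have hdm := Nat.div_add_mod (ℓ - r) k
        have hmod : (ℓ - r) % k < k := Nat.mod_lt _ hk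
        have hnat : ℓ + 1 ≤ k * ((ℓ - r)/k) + 2*k := by
          set t := k * ((ℓ - r)/k)
          omega
        have hcast : (ℓ:ℝ) + 1 ≤ (k:ℝ) * (((ℓ - r)/k : ℕ):ℝ) + 2*(k:ℝ) := by
          exact_mod_cast hnat
        rw [div_le_iff₀ (by positivity)]
        have hl4 : (4:ℝ)*(k:ℝ) ≤ (ℓ:ℝ) := by exact_mod_cast hℓ4k
        nlinarith
      calc ((T σv r).card : ℝ)
          ≤ 2 * (g:ℝ)^ℓ * Real.exp (-(c * ((((ℓ - r)/k : ℕ)):ℝ))) := by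
            rw [hT]; exact h2
        _ ≤ 2 * (g:ℝ)^ℓ * E := by
            rw [hE]
            apply mul_le_mul_of_nonneg_left _ (by positivity)
            apply Real.exp_le_exp.2
            apply neg_le_neg
            exact mul_le_mul_of_nonneg_left hnr hc0.le
    have htotal : ((Finset.univ.filter fun w : Fin ℓ → Fin g =>
        ¬ EKNormalStr g ε k (List.ofFn fun i => ((w i : ℕ)))).card : ℝ)
        ≤ (g:ℝ)^k * ((k:ℝ) * (2*(g:ℝ)^ℓ*E)) := by
      have h1 := Finset.card_le_card hsubset
      have h2 := Finset.card_biUnion_le (s := (Finset.univ : Finset (Fin k → Fin g)))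
        (t := fun σv => (Finset.range k).biUnion (fun r => T σv r))
      calc ((Finset.univ.filter fun w : Fin ℓ → Fin g =>
            ¬ EKNormalStr g ε k (List.ofFn fun i => ((w i : ℕ)))).card : ℝ)
          ≤ ((Finset.univ.biUnion (fun σv : Fin k → Fin g =>
              (Finset.range k).biUnion (fun r => T σv r))).card : ℝ) := by
            exact_mod_cast h1
        _ ≤ ∑ σv : Fin k → Fin g, (((Finset.range k).biUnion (fun r => T σv r)).card : ℝ) := by
            exact_mod_cast h2
        _ ≤ ∑ σv : Fin k → Fin g, ∑ r ∈ Finset.range k, ((T σv r).card : ℝ) := by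
            refine Finset.sum_le_sum fun σv _ => ?_
            exact_mod_cast Finset.card_biUnion_le
        _ ≤ ∑ _σv : Fin k → Fin g, ∑ _r ∈ Finset.range k, (2*(g:ℝ)^ℓ*E) := by
            refine Finset.sum_le_sum fun σv _ => Finset.sum_le_sum fun r hr => hTbound σv r hr
        _ = (g:ℝ)^k * ((k:ℝ) * (2*(g:ℝ)^ℓ*E)) := by
            rw [Finset.sum_const, Finset.sum_const, Finset.card_range, Finset.card_univ]
            rw [Fintype.card_fun, Fintype.card_fin, Fintype.card_fin]
            push_cast
            ring
    have hrpow : (g:ℝ)^((ℓ:ℝ)*(1-δ')) = (g:ℝ)^ℓ * Real.exp (-(c*(ℓ:ℝ)/(4*(k:ℝ)))) := by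
      rw [show (ℓ:ℝ)*(1-δ') = (ℓ:ℝ) + (-(δ'*ℓ)) by ring]
      rw [Real.rpow_add hg0R, Real.rpow_natCast]
      congr 1
      rw [Real.rpow_def_of_pos hg0R]
      congr 1
      rw [hδ'def]
      field_simp
    rw [hrpow]
    refine le_trans htotal ?_
    rw [show (g:ℝ)^k * ((k:ℝ) * (2*(g:ℝ)^ℓ*E)) = (2*(k:ℝ)*(g:ℝ)^k*E) * (g:ℝ)^ℓ by ring]
    rw [show (g:ℝ)^ℓ * Real.exp (-(c*(ℓ:ℝ)/(4*(k:ℝ))))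
        = Real.exp (-(c*(ℓ:ℝ)/(4*(k:ℝ)))) * (g:ℝ)^ℓ by ring]
    apply mul_le_mul_of_nonneg_right _ (by positivity)
    have h2k : (0:ℝ) < 2*(k:ℝ)*(g:ℝ)^k := by positivity
    rw [hE, ← Real.exp_log h2k, ← Real.exp_add, Real.exp_le_exp]
    have hlog : Real.log (2*(k:ℝ)*(g:ℝ)^k) ≤ c*(ℓ:ℝ)/(4*(k:ℝ)) := by
      have h7 := mul_le_mul_of_nonneg_left hN2ℓ
        (le_of_lt (show (0:ℝ) < c/(4*(k:ℝ)) by positivity))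
      have h8 : Real.log (2*(k:ℝ)*(g:ℝ)^k)
          = (c/(4*(k:ℝ))) * ((4*(k:ℝ)/c) * Real.log (2*(k:ℝ)*(g:ℝ)^k)) := by
        field_simp
      rw [h8]
      calc (c/(4*(k:ℝ))) * ((4*(k:ℝ)/c) * Real.log (2*(k:ℝ)*(g:ℝ)^k))
          ≤ (c/(4*(k:ℝ))) * (ℓ:ℝ) := h7
        _ = c*(ℓ:ℝ)/(4*(k:ℝ)) := by ring
    have hhalf : c * ((ℓ:ℝ)/(2*(k:ℝ))) = 2*(c*(ℓ:ℝ)/(4*(k:ℝ))) := by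
      field_simp
      ring
    linarith
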